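/- Let V be a 4-dimensional vector space with basis {v₁,v₂,v₃,v₄} and bilinear product ⋄ whose nonzero products are v₁⋄v₂ = v₁ = −v₂⋄v₁, v₁⋄v₃ = −v₄, v₂⋄v₃ = v₃. Then (V,⋄) is a Leibniz algebra, and the bilinear form ω with ω(v₁,v₃) = 1 = −ω(v₃,v₁), ω(v₂,v₄) = 1 = −ω(v₄,v₂) (all other basis pairings zero) is a nondegenerate skew-symmetric invariant form, so (V,⋄,ω) is a quadratic Leibniz algebra. -/

import Mathlib

/-- The 4-dimensional algebra with `v₁⋄v₂ = v₁ = −v₂⋄v₁`, `v₁⋄v₃ = −v₄`, `v₂⋄v₃ = v₃`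
(other products zero) is a Leibniz algebra, and the form ω with
`ω(v₁,v₃) = 1 = −ω(v₃,v₁)`, `ω(v₂,v₄) = 1 = −ω(v₄,v₂)` (other pairings zero)
makes it a quadratic Leibniz algebra. -/
theorem dim4_quadratic_leibniz (K V : Type*) [Field K] [CharZero K]
    [AddCommGroup V] [Module K V]
    (v : Module.Basis (Fin 4) K V)
    (mul : V →ₗ[K] V →ₗ[K] V)
    (hmul : ∀ i j : Fin 4,
      mul (v i) (v j) =
        if i = 0 ∧ j = 1 then v 0
        else if i = 1 ∧ j = 0 then -(v 0 : V)
        else if i = 0 ∧ j = 2 then -(v 3 : V)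
        else if i = 1 ∧ j = 2 then v 2
        else 0)
    (ω : V →ₗ[K] V →ₗ[K] K)
    (hω : ∀ i j : Fin 4,
      ω (v i) (v j) =
        if i = 0 ∧ j = 2 then 1
        else if i = 2 ∧ j = 0 then -1
        else if i = 1 ∧ j = 3 then 1
        else if i = 3 ∧ j = 1 then -1
        else 0) :
    (∀ b₁ b₂ b₃ : V,
      mul b₁ (mul b₂ b₃) = mul (mul b₁ b₂) b₃ + mul b₂ (mul b₁ b₃)) ∧
    (∀ b₁ b₂ : V, ω b₁ b₂ = -ω b₂ b₁) ∧
    (∀ b₁ b₂ b₃ : V, ω (mul b₁ b₂) b₃ = ω b₁ (mul b₂ b₃ + mul b₃ b₂)) ∧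
    (∀ b : V, (∀ c : V, ω b c = 0) → b = 0) := by
  have hexp : ∀ b : V, b = v.repr b 0 • v 0 + v.repr b 1 • v 1 +
      v.repr b 2 • v 2 + v.repr b 3 • v 3 := by
    intro b
    conv_lhs => rw [← v.sum_repr b]
    rw [Fin.sum_univ_four]
  have m00 : mul (v 0) (v 0) = 0 := by rw [hmul]; simp
  have m01 : mul (v 0) (v 1) = v 0 := by rw [hmul]; simp
  have m02 : mul (v 0) (v 2) = -v 3 := by rw [hmul]; simp
  have m03 : mul (v 0) (v 3) = 0 := by rw [hmul]; simp
  have m10 : mul (v 1) (v 0) = -v 0 := by rw [hmul]; simp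
  have m11 : mul (v 1) (v 1) = 0 := by rw [hmul]; simp
  have m12 : mul (v 1) (v 2) = v 2 := by rw [hmul]; simp
  have m13 : mul (v 1) (v 3) = 0 := by rw [hmul]; simp
  have m20 : mul (v 2) (v 0) = 0 := by rw [hmul]; simp
  have m21 : mul (v 2) (v 1) = 0 := by rw [hmul]; simp
  have m22 : mul (v 2) (v 2) = 0 := by rw [hmul]; simp
  have m23 : mul (v 2) (v 3) = 0 := by rw [hmul]; simp
  have m30 : mul (v 3) (v 0) = 0 := by rw [hmul]; simp
  have m31 : mul (v 3) (v 1) = 0 := by rw [hmul]; simp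
  have m32 : mul (v 3) (v 2) = 0 := by rw [hmul]; simp
  have m33 : mul (v 3) (v 3) = 0 := by rw [hmul]; simp
  have w00 : ω (v 0) (v 0) = (0:K) := by rw [hω]; simp
  have w01 : ω (v 0) (v 1) = (0:K) := by rw [hω]; simp
  have w02 : ω (v 0) (v 2) = (1:K) := by rw [hω]; simp
  have w03 : ω (v 0) (v 3) = (0:K) := by rw [hω]; simp
  have w10 : ω (v 1) (v 0) = (0:K) := by rw [hω]; simp
  have w11 : ω (v 1) (v 1) = (0:K) := by rw [hω]; simp
  have w12 : ω (v 1) (v 2) = (0:K) := by rw [hω]; simp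
  have w13 : ω (v 1) (v 3) = (1:K) := by rw [hω]; simp
  have w20 : ω (v 2) (v 0) = (-1:K) := by rw [hω]; simp
  have w21 : ω (v 2) (v 1) = (0:K) := by rw [hω]; simp
  have w22 : ω (v 2) (v 2) = (0:K) := by rw [hω]; simp
  have w23 : ω (v 2) (v 3) = (0:K) := by rw [hω]; simp
  have w30 : ω (v 3) (v 0) = (0:K) := by rw [hω]; simp
  have w31 : ω (v 3) (v 1) = (-1:K) := by rw [hω]; simp
  have w32 : ω (v 3) (v 2) = (0:K) := by rw [hω]; simp
  have w33 : ω (v 3) (v 3) = (0:K) := by rw [hω]; simp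
  refine ⟨?_, ?_, ?_, ?_⟩
  · intro b₁ b₂ b₃
    rw [hexp b₁, hexp b₂, hexp b₃]
    simp only [map_add, map_smul, map_neg, map_zero, LinearMap.add_apply,
      LinearMap.smul_apply, LinearMap.neg_apply, LinearMap.zero_apply,
      smul_zero, smul_neg, neg_zero, add_zero, zero_add,
      m00, m01, m02, m03, m10, m11, m12, m13, m20, m21, m22, m23, m30, m31, m32, m33]
    module
  · intro b₁ b₂
    rw [hexp b₁, hexp b₂]
    simp only [map_add, map_smul, LinearMap.add_apply, LinearMap.smul_apply,
      smul_zero, add_zero, zero_add, smul_eq_mul, mul_one, mul_neg, mul_zero,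
      w00, w01, w02, w03, w10, w11, w12, w13, w20, w21, w22, w23, w30, w31, w32, w33]
    ring
  · intro b₁ b₂ b₃
    rw [hexp b₁, hexp b₂, hexp b₃]
    simp only [map_add, map_smul, map_neg, map_zero, LinearMap.add_apply,
      LinearMap.smul_apply, LinearMap.neg_apply, LinearMap.zero_apply,
      smul_zero, smul_neg, neg_zero, add_zero, zero_add, smul_eq_mul,
      mul_one, mul_neg, mul_zero, neg_neg,
      m00, m01, m02, m03, m10, m11, m12, m13, m20, m21, m22, m23, m30, m31, m32, m33, w00, w01, w02, w03, w10, w11, w12, w13, w20, w21, w22, w23, w30, w31, w32, w33]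
    ring
  · intro b hb
    have h0 := hb (v 2)
    have h1 := hb (v 3)
    have h2 := hb (v 0)
    have h3 := hb (v 1)
    rw [hexp b] at h0 h1 h2 h3
    simp only [map_add, map_smul, LinearMap.add_apply, LinearMap.smul_apply,
      smul_zero, add_zero, zero_add, smul_eq_mul, mul_one, mul_neg, mul_zero,
      w00, w01, w02, w03, w10, w11, w12, w13, w20, w21, w22, w23, w30, w31, w32, w33] at h0 h1 h2 h3
    rw [hexp b]
    rw [h0, h1]
    rw [neg_eq_zero] at h2 h3
    rw [h2, h3]
    simp
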